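/- Let L = U³ ⊕ E8(−1)² ⊕ (−2) and L' = U⁴ ⊕ E8(−1)², and let G be any subgroup of the isometry group O(L). Then there exists a primitive embedding ι : L → L' and an extension of the action of G to isometries of L' (i.e., a group homomorphism G → O(L') whose action on ι(L) agrees via ι with the action of G on L) such that S_G(L') = ι(S_G(L)). -/

import Mathlib

open Matrix

/-!
The lattice `L = U³ ⊕ E8(-1)² ⊕ (-2)` embeds primitively and `G`-equivariantly
into `L' = U⁴ ⊕ E8(-1)²` for any group `G` of isometries of `L`, in such a way
that the co-invariant lattices agree.
-/

/-- The hyperbolic plane `U`. -/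
def UMat : Matrix (Fin 2) (Fin 2) ℤ := !![0, 1; 1, 0]

/-- `E8(-1)`: the negative of the Cartan matrix of `E8` (Bourbaki numbering). -/
def E8N : Matrix (Fin 8) (Fin 8) ℤ :=
  !![-2,  0,  1,  0,  0,  0,  0,  0;
      0, -2,  0,  1,  0,  0,  0,  0;
      1,  0, -2,  1,  0,  0,  0,  0;
      0,  1,  1, -2,  1,  0,  0,  0;
      0,  0,  0,  1, -2,  1,  0,  0;
      0,  0,  0,  0,  1, -2,  1,  0;
      0,  0,  0,  0,  0,  1, -2,  1;
      0,  0,  0,  0,  0,  0,  1, -2]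

/-- The rank 1 lattice `(-2)`. -/
def minusTwo : Matrix (Fin 1) (Fin 1) ℤ := !![-2]

/-- Index type for `L = U³ ⊕ E8(-1)² ⊕ (-2)` (rank 23). -/
abbrev IdxL : Type := Fin 2 ⊕ (Fin 2 ⊕ (Fin 2 ⊕ (Fin 8 ⊕ (Fin 8 ⊕ Fin 1))))

/-- Index type for `L' = U⁴ ⊕ E8(-1)²` (rank 24). -/
abbrev IdxL' : Type := Fin 2 ⊕ (Fin 2 ⊕ (Fin 2 ⊕ (Fin 2 ⊕ (Fin 8 ⊕ Fin 8))))

/-- Gram matrix of `L = U³ ⊕ E8(-1)² ⊕ (-2)`. -/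
def BL : Matrix IdxL IdxL ℤ :=
  Matrix.fromBlocks UMat 0 0 (Matrix.fromBlocks UMat 0 0
    (Matrix.fromBlocks UMat 0 0 (Matrix.fromBlocks E8N 0 0
      (Matrix.fromBlocks E8N 0 0 minusTwo))))

/-- Gram matrix of `L' = U⁴ ⊕ E8(-1)²`. -/
def BL' : Matrix IdxL' IdxL' ℤ :=
  Matrix.fromBlocks UMat 0 0 (Matrix.fromBlocks UMat 0 0
    (Matrix.fromBlocks UMat 0 0 (Matrix.fromBlocks UMat 0 0
      (Matrix.fromBlocks E8N 0 0 E8N))))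

/-- The bilinear form of the lattice with Gram matrix `B`. -/
def latForm {ι : Type} [Fintype ι] (B : Matrix ι ι ℤ) (x y : ι → ℤ) : ℤ :=
  x ⬝ᵥ B.mulVec y

/-- `L = U³ ⊕ E8(-1)² ⊕ (-2)` as a `ℤ`-module. -/
abbrev ML : Type := IdxL → ℤ

/-- `L' = U⁴ ⊕ E8(-1)²` as a `ℤ`-module. -/
abbrev ML' : Type := IdxL' → ℤ

/-! ### Auxiliary definitions -/

def vIdx : IdxL := .inr (.inr (.inr (.inr (.inr 0))))
def e1Idx : IdxL' := .inr (.inr (.inr (.inl 0)))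
def e2Idx : IdxL' := .inr (.inr (.inr (.inl 1)))

/-- The generator of the `(-2)` summand of `L`. -/
def vv : ML := fun i => if i = vIdx then 1 else 0
/-- First basis vector of the fourth hyperbolic plane of `L'`. -/
def E1v : ML' := fun j => if j = e1Idx then 1 else 0
/-- Second basis vector of the fourth hyperbolic plane of `L'`. -/
def E2v : ML' := fun j => if j = e2Idx then 1 else 0

/-- Matrix of the embedding `L → L'`; the `(-2)`-generator goes to `E1 - E2`. -/
def embM : Matrix IdxL' IdxL ℤ := Matrix.of fun j i =>
  match j, i with
  | .inl a, .inl b => if a = b then 1 else 0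
  | .inr (.inl a), .inr (.inl b) => if a = b then 1 else 0
  | .inr (.inr (.inl a)), .inr (.inr (.inl b)) => if a = b then 1 else 0
  | .inr (.inr (.inr (.inl a))), .inr (.inr (.inr (.inr (.inr _)))) =>
      if a = 0 then 1 else -1
  | .inr (.inr (.inr (.inr (.inl a)))), .inr (.inr (.inr (.inl b))) =>
      if a = b then 1 else 0
  | .inr (.inr (.inr (.inr (.inr a)))), .inr (.inr (.inr (.inr (.inl b)))) =>
      if a = b then 1 else 0
  | _, _ => 0

/-- Matrix of the "projection" `L' → L` forgetting the fourth hyperbolic plane. -/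
def Xmat : Matrix IdxL IdxL' ℤ := Matrix.of fun i j =>
  match i, j with
  | .inl a, .inl b => if a = b then 1 else 0
  | .inr (.inl a), .inr (.inl b) => if a = b then 1 else 0
  | .inr (.inr (.inl a)), .inr (.inr (.inl b)) => if a = b then 1 else 0
  | .inr (.inr (.inr (.inl a))), .inr (.inr (.inr (.inr (.inl b)))) =>
      if a = b then 1 else 0
  | .inr (.inr (.inr (.inr (.inl a)))), .inr (.inr (.inr (.inr (.inr b)))) =>
      if a = b then 1 else 0
  | _, _ => 0

/-- A left inverse of `embM`. -/
def Pmat : Matrix IdxL IdxL' ℤ := Matrix.of fun i j =>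
  match i, j with
  | .inl a, .inl b => if a = b then 1 else 0
  | .inr (.inl a), .inr (.inl b) => if a = b then 1 else 0
  | .inr (.inr (.inl a)), .inr (.inr (.inl b)) => if a = b then 1 else 0
  | .inr (.inr (.inr (.inl a))), .inr (.inr (.inr (.inr (.inl b)))) =>
      if a = b then 1 else 0
  | .inr (.inr (.inr (.inr (.inl a)))), .inr (.inr (.inr (.inr (.inr b)))) =>
      if a = b then 1 else 0
  | .inr (.inr (.inr (.inr (.inr _)))), .inr (.inr (.inr (.inl b))) =>
      if b = 0 then 1 else 0
  | _, _ => 0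

/-- The inverse of `E8N` (an integer matrix, `E8` being unimodular). -/
def E8inv : Matrix (Fin 8) (Fin 8) ℤ :=
  !![ -4,  -5,  -7, -10,  -8,  -6,  -4,  -2;
      -5,  -8, -10, -15, -12,  -9,  -6,  -3;
      -7, -10, -14, -20, -16, -12,  -8,  -4;
     -10, -15, -20, -30, -24, -18, -12,  -6;
      -8, -12, -16, -24, -20, -15, -10,  -5;
      -6,  -9, -12, -18, -15, -12,  -8,  -4;
      -4,  -6,  -8, -12, -10,  -8,  -6,  -3;
      -2,  -3,  -4,  -6,  -5,  -4,  -3,  -2]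

/-- Near inverse of `BL`: `Kmat * BL` is diagonal. -/
def Kmat : Matrix IdxL IdxL ℤ :=
  Matrix.fromBlocks UMat 0 0 (Matrix.fromBlocks UMat 0 0
    (Matrix.fromBlocks UMat 0 0 (Matrix.fromBlocks E8inv 0 0
      (Matrix.fromBlocks E8inv 0 0 (1 : Matrix (Fin 1) (Fin 1) ℤ)))))

def Dmat : Matrix IdxL IdxL ℤ :=
  Matrix.diagonal (fun i => if i = vIdx then (-2 : ℤ) else 1)

def CU : Matrix (Fin 2) (Fin 2) ℤ := !![0, 1; 0, 0]

def CE8 : Matrix (Fin 8) (Fin 8) ℤ :=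
  Matrix.of fun i j => if i = j then -1 else if j < i then E8N i j else 0

/-- A "half" of `BL`: `CL + CLᵀ = BL`. -/
def CL : Matrix IdxL IdxL ℤ :=
  Matrix.fromBlocks CU 0 0 (Matrix.fromBlocks CU 0 0
    (Matrix.fromBlocks CU 0 0 (Matrix.fromBlocks CE8 0 0
      (Matrix.fromBlocks CE8 0 0 !![-1]))))

/-! ### Small dot-product helpers -/

lemma dot_delta {ι : Type} [Fintype ι] [DecidableEq ι] (u : ι → ℤ) (k : ι) (c : ℤ) :
    (u ⬝ᵥ fun j => if j = k then c else 0) = u k * c := by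
  simp [dotProduct, mul_ite, Finset.sum_ite_eq]

lemma delta_dot {ι : Type} [Fintype ι] [DecidableEq ι] (u : ι → ℤ) (k : ι) (c : ℤ) :
    ((fun j => if j = k then c else 0) ⬝ᵥ u) = c * u k := by
  simp [dotProduct, ite_mul, Finset.sum_ite_eq]

lemma dot_vv (u : ML) : u ⬝ᵥ vv = u vIdx := by
  exact (dot_delta u vIdx 1).trans (mul_one _)

lemma vv_dot (u : ML) : vv ⬝ᵥ u = u vIdx := by
  exact (delta_dot u vIdx 1).trans (one_mul _)

lemma dot_E1v (u : ML') : u ⬝ᵥ E1v = u e1Idx := by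
  exact (dot_delta u e1Idx 1).trans (mul_one _)

lemma dot_E2v (u : ML') : u ⬝ᵥ E2v = u e2Idx := by
  exact (dot_delta u e2Idx 1).trans (mul_one _)

lemma E1v_dot (u : ML') : E1v ⬝ᵥ u = u e1Idx := by
  exact (delta_dot u e1Idx 1).trans (one_mul _)

lemma E2v_dot (u : ML') : E2v ⬝ᵥ u = u e2Idx := by
  exact (delta_dot u e2Idx 1).trans (one_mul _)

lemma mulVec_vecMulVec {ι κ : Type} [Fintype ι] [Fintype κ]
    (u : ι → ℤ) (w : κ → ℤ) (x : κ → ℤ) :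
    (Matrix.vecMulVec u w) *ᵥ x = (w ⬝ᵥ x) • u := by
  funext i
  simp only [Matrix.mulVec, Matrix.vecMulVec_apply, dotProduct, Pi.smul_apply,
    smul_eq_mul, Finset.sum_mul]
  exact Finset.sum_congr rfl fun j _ => by ring

/-! ### Matrix facts (verified by `decide`) -/

lemma I1 : embMᵀ * BL' * embM = BL := by decide
lemma K1 : Kmat * BL = Dmat := by decide
lemma C1 : CL + CLᵀ = BL := by decide
lemma BLsymm : ∀ i j, BL i j = BL j i := by
  have h : BLᵀ = BL := by decide
  intro i j; exact (congrFun (congrFun h i) j).symm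
lemma XembM : Xmat * embM = 1 - Matrix.vecMulVec vv vv := by decide
lemma D1 : embM * Xmat = 1 - Matrix.vecMulVec E1v E1v - Matrix.vecMulVec E2v E2v := by decide
lemma P1 : Pmat * embM = 1 := by decide
lemma P2 : embM * Pmat = 1 + Matrix.vecMulVec E2v (-E1v - E2v) := by decide
lemma embM_vv : embM *ᵥ vv = E1v - E2v := by
  funext j
  show (fun i => embM j i) ⬝ᵥ vv = (E1v - E2v) j
  rw [dot_vv]
  revert j; decide
lemma X_E1v : Xmat *ᵥ E1v = 0 := by
  funext i
  show (fun j => Xmat i j) ⬝ᵥ E1v = 0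
  rw [dot_E1v]
  revert i; decide
lemma X_E2v : Xmat *ᵥ E2v = 0 := by
  funext i
  show (fun j => Xmat i j) ⬝ᵥ E2v = 0
  rw [dot_E2v]
  revert i; decide
lemma emb_e1 (z : ML) : (embM *ᵥ z) e1Idx = z vIdx := by
  show (fun i => embM e1Idx i) ⬝ᵥ z = z vIdx
  have h : (fun i => embM e1Idx i) = vv := by funext i; revert i; decide
  rw [h, vv_dot]
lemma emb_e2 (z : ML) : (embM *ᵥ z) e2Idx = -z vIdx := by
  show (fun i => embM e2Idx i) ⬝ᵥ z = -z vIdx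
  have h : (fun i => embM e2Idx i) = fun i => if i = vIdx then (-1 : ℤ) else 0 := by
    funext i; revert i; decide
  rw [h, delta_dot]; ring
lemma BLp_E1 : BL' *ᵥ E1v = E2v := by
  funext i
  show (fun j => BL' i j) ⬝ᵥ E1v = E2v i
  rw [dot_E1v]
  revert i; decide
lemma BLp_E2 : BL' *ᵥ E2v = E1v := by
  funext i
  show (fun j => BL' i j) ⬝ᵥ E2v = E1v i
  rw [dot_E2v]
  revert i; decide
lemma E1v_e1 : E1v e1Idx = 1 := by decide
lemma E1v_e2 : E1v e2Idx = 0 := by decide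
lemma E2v_e1 : E2v e1Idx = 0 := by decide
lemma E2v_e2 : E2v e2Idx = 1 := by decide
lemma BLp_row_e1 (u : ML') : (BL' *ᵥ u) e1Idx = u e2Idx := by
  show (fun j => BL' e1Idx j) ⬝ᵥ u = u e2Idx
  have h : (fun j => BL' e1Idx j) = E2v := by funext j; revert j; decide
  rw [h, E2v_dot]
lemma BLp_row_e2 (u : ML') : (BL' *ᵥ u) e2Idx = u e1Idx := by
  show (fun j => BL' e2Idx j) ⬝ᵥ u = u e1Idx
  have h : (fun j => BL' e2Idx j) = E1v := by funext j; revert j; decide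
  rw [h, E1v_dot]

lemma BL_vv : BL *ᵥ vv = fun i => if i = vIdx then (-2 : ℤ) else 0 := by
  funext i
  show (fun j => BL i j) ⬝ᵥ vv = _
  rw [dot_vv]
  revert i; decide
lemma X_row_v (y : ML') : (Xmat *ᵥ y) vIdx = 0 := by
  show (fun j => Xmat vIdx j) ⬝ᵥ y = 0
  have h : (fun j => Xmat vIdx j) = fun _ => (0 : ℤ) := by funext j; revert j; decide
  rw [h]
  simp [dotProduct]

/-! ### `latForm` basics -/

lemma lat_bilin {ι : Type} [Fintype ι] (B : Matrix ι ι ℤ) (u w u' w' : ι → ℤ) (c c' : ℤ) :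
    latForm B (u + c • u') (w + c' • w')
      = latForm B u w + c' * latForm B u w' + c * latForm B u' w
        + c * c' * latForm B u' w' := by
  unfold latForm
  simp only [Matrix.mulVec_add, Matrix.mulVec_smul, dotProduct_add, add_dotProduct,
    dotProduct_smul, smul_dotProduct, smul_eq_mul]
  ring

lemma lat_smul_right {ι : Type} [Fintype ι] (B : Matrix ι ι ℤ) (u w : ι → ℤ) (c : ℤ) :
    latForm B u (c • w) = c * latForm B u w := by
  unfold latForm
  rw [Matrix.mulVec_smul, dotProduct_smul, smul_eq_mul]

lemma lat_smul_left {ι : Type} [Fintype ι] (B : Matrix ι ι ℤ) (u w : ι → ℤ) (c : ℤ) :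
    latForm B (c • u) w = c * latForm B u w := by
  unfold latForm
  rw [smul_dotProduct, smul_eq_mul]

lemma lat_add_right {ι : Type} [Fintype ι] (B : Matrix ι ι ℤ) (u w w' : ι → ℤ) :
    latForm B u (w + w') = latForm B u w + latForm B u w' := by
  unfold latForm
  rw [Matrix.mulVec_add, dotProduct_add]

lemma lat_sub_right {ι : Type} [Fintype ι] (B : Matrix ι ι ℤ) (u w w' : ι → ℤ) :
    latForm B u (w - w') = latForm B u w - latForm B u w' := by
  unfold latForm
  rw [Matrix.mulVec_sub, dotProduct_sub]

lemma lat_sub_left {ι : Type} [Fintype ι] (B : Matrix ι ι ℤ) (u u' w : ι → ℤ) :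
    latForm B (u - u') w = latForm B u w - latForm B u' w := by
  unfold latForm
  rw [sub_dotProduct]

lemma lat_vv_right (u : ML) : latForm BL u vv = -2 * u vIdx := by
  unfold latForm
  rw [BL_vv, dot_delta]
  ring

lemma lat_vv_left (u : ML) : latForm BL vv u = -2 * u vIdx := by
  unfold latForm
  rw [vv_dot]
  show (fun j => BL vIdx j) ⬝ᵥ u = -2 * u vIdx
  have h : (fun j => BL vIdx j) = fun j => if j = vIdx then (-2 : ℤ) else 0 := by
    funext j; revert j; decide
  rw [h, delta_dot]

/-- The embedding is isometric. -/
lemma F1 (z z' : ML) : latForm BL' (embM *ᵥ z) (embM *ᵥ z') = latForm BL z z' := by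
  unfold latForm
  calc (embM *ᵥ z) ⬝ᵥ (BL' *ᵥ (embM *ᵥ z'))
      = (embM *ᵥ z) ⬝ᵥ ((BL' * embM) *ᵥ z') := by rw [Matrix.mulVec_mulVec]
    _ = ((embM *ᵥ z) ᵥ* (BL' * embM)) ⬝ᵥ z' := Matrix.dotProduct_mulVec _ _ _
    _ = ((z ᵥ* embMᵀ) ᵥ* (BL' * embM)) ⬝ᵥ z' := by rw [Matrix.vecMul_transpose]
    _ = (z ᵥ* (embMᵀ * (BL' * embM))) ⬝ᵥ z' := by rw [Matrix.vecMul_vecMul]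
    _ = (z ᵥ* BL) ⬝ᵥ z' := by rw [← Matrix.mul_assoc, I1]
    _ = z ⬝ᵥ (BL *ᵥ z') := (Matrix.dotProduct_mulVec _ _ _).symm

/-- Key bilinear expansion on `L'`. -/
lemma L1 (z z' : ML) (a b a' b' : ℤ) :
    latForm BL' (embM *ᵥ z + a • E1v + b • E2v) (embM *ᵥ z' + a' • E1v + b' • E2v)
      = latForm BL z z' + (b - a) * z' vIdx + (b' - a') * z vIdx
        + (a * b' + b * a') := by
  have h1 : (embM *ᵥ z) ⬝ᵥ (BL' *ᵥ (embM *ᵥ z')) = latForm BL z z' := F1 z z'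
  unfold latForm at h1 ⊢
  simp only [Matrix.mulVec_add, Matrix.mulVec_smul, dotProduct_add, add_dotProduct,
    dotProduct_smul, smul_dotProduct, smul_eq_mul, BLp_E1, BLp_E2, dot_E1v, dot_E2v,
    E1v_dot, E2v_dot, BLp_row_e1, BLp_row_e2, Pi.add_apply, Pi.smul_apply,
    emb_e1, emb_e2, E1v_e1, E1v_e2, E2v_e1, E2v_e2, h1]
  ring

/-! ### Evenness of the diagonal -/

lemma evenSelf (w : ML) : (2 : ℤ) ∣ latForm BL w w := by
  unfold latForm
  rw [← C1, Matrix.add_mulVec, dotProduct_add]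
  have h : w ⬝ᵥ (CLᵀ *ᵥ w) = w ⬝ᵥ (CL *ᵥ w) := by
    rw [Matrix.mulVec_transpose, dotProduct_comm, ← Matrix.dotProduct_mulVec]
  rw [h]
  exact ⟨w ⬝ᵥ (CL *ᵥ w), by ring⟩

/-- The congruence `g v ≡ v (mod 2 L)` for any isometry `g` of `L`. -/
lemma evenKey (g : ML ≃ₗ[ℤ] ML)
    (hg : ∀ x y : ML, latForm BL (g x) (g y) = latForm BL x y) :
    ∀ i, (2 : ℤ) ∣ (g vv i - vv i) := by
  have hA : ∀ x : ML, (2 : ℤ) ∣ latForm BL (g vv) x := by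
    intro x
    have h := hg vv (g.symm x)
    rw [g.apply_symm_apply] at h
    rw [h, lat_vv_left]
    exact ⟨-(g.symm x vIdx), by ring⟩
  have hBc : ∀ j, (2 : ℤ) ∣ (BL *ᵥ g vv) j := by
    intro j
    have h := hA (fun i => if i = j then 1 else 0)
    unfold latForm at h
    have hBd : (BL *ᵥ fun i => if i = j then (1:ℤ) else 0) = fun i => BL i j := by
      funext i
      show (fun k => BL i k) ⬝ᵥ _ = BL i j
      simpa using dot_delta (fun k => BL i k) j 1
    rw [hBd] at h
    have hcol : (fun i => BL i j) = fun i => BL j i := by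
      funext i; exact BLsymm i j
    rw [hcol] at h
    show (2:ℤ) ∣ (fun k => BL j k) ⬝ᵥ g vv
    rwa [dotProduct_comm] at h
  have hcne : ∀ i, i ≠ vIdx → (2 : ℤ) ∣ g vv i := by
    intro i hi
    have h : Dmat *ᵥ (g vv) = Kmat *ᵥ (BL *ᵥ g vv) := by
      rw [Matrix.mulVec_mulVec, K1]
    have h2 : (2:ℤ) ∣ (Dmat *ᵥ g vv) i := by
      rw [h]
      show (2:ℤ) ∣ (fun j => Kmat i j) ⬝ᵥ (BL *ᵥ g vv)
      unfold dotProduct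
      exact Finset.dvd_sum fun j _ => Dvd.dvd.mul_left (hBc j) _
    unfold Dmat at h2
    rw [Matrix.mulVec_diagonal] at h2
    rwa [if_neg hi, one_mul] at h2
  -- parity of the `vIdx` coordinate
  have hm : (2 : ℤ) ∣ (g vv vIdx - 1) := by
    have hcc : latForm BL (g vv) (g vv) = -2 := by
      rw [hg vv vv, lat_vv_right]
      show -2 * vv vIdx = -2
      have : vv vIdx = 1 := by decide
      rw [this]; ring
    set m := g vv vIdx with hmdef
    set u : ML := fun i => g vv i - m * vv i with hudef
    have huv : u vIdx = 0 := by
      show g vv vIdx - m * vv vIdx = 0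
      have : vv vIdx = 1 := by decide
      rw [this, ← hmdef]; ring
    have hueven : ∀ i, (2:ℤ) ∣ u i := by
      intro i
      by_cases hi : i = vIdx
      · rw [hi, huv]
        exact dvd_zero 2
      · show (2:ℤ) ∣ g vv i - m * vv i
        have : vv i = 0 := by simp [vv, hi]
        rw [this, mul_zero, sub_zero]
        exact hcne i hi
    set w : ML := fun i => u i / 2 with hwdef
    have huw : u = (2:ℤ) • w := by
      funext i
      show u i = 2 * (u i / 2)
      exact (Int.mul_ediv_cancel' (hueven i)).symm
    have hdecomp : g vv = u + m • vv := by
      funext i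
      show g vv i = (g vv i - m * vv i) + m * vv i
      ring
    have hexp := lat_bilin BL u u vv vv m m
    rw [← hdecomp] at hexp
    have huvv : latForm BL u vv = 0 := by rw [lat_vv_right, huv]; ring
    have hvvu : latForm BL vv u = 0 := by rw [lat_vv_left, huv]; ring
    have hvvvv : latForm BL vv vv = -2 := by
      rw [lat_vv_right]
      have : vv vIdx = 1 := by decide
      rw [this]; ring
    have huu : latForm BL u u = 4 * latForm BL w w := by
      rw [huw, lat_smul_left, lat_smul_right]; ring
    obtain ⟨k, hk⟩ := evenSelf w
    rw [hcc, huvv, hvvu, hvvvv, huu, hk] at hexp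
    -- -2 = 4 * (2 * k) + m * 0 + m * 0 + m * m * -2
    have hmm : m * m = 4 * k + 1 := by linarith
    rcases Int.even_or_odd m with ⟨n, hn⟩ | ⟨n, hn⟩
    · exfalso
      have h4 : m * m = 4 * (n * n) := by rw [hn]; ring
      have := hmm ▸ h4
      omega
    · exact ⟨n, by omega⟩
  intro i
  by_cases hi : i = vIdx
  · rw [hi]
    have : vv vIdx = 1 := by decide
    rw [this]
    exact hm
  · have : vv i = 0 := by simp [vv, hi]
    rw [this, sub_zero]
    exact hcne i hi

/-! ### The extension `ρ` of an isometry `g` to `L'` -/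

/-- Half of `g v - v` (integral because `g v ≡ v mod 2L`). -/
def hvec (g : ML ≃ₗ[ℤ] ML) : ML := fun i => (g vv i - vv i) / 2

/-- The integrality condition making `rho` work. -/
def Hg (g : ML ≃ₗ[ℤ] ML) : Prop := (2 : ℤ) • hvec g = g vv - vv

lemma hg_of_iso (g : ML ≃ₗ[ℤ] ML)
    (hg : ∀ x y : ML, latForm BL (g x) (g y) = latForm BL x y) : Hg g := by
  funext i
  show 2 * ((g vv i - vv i) / 2) = g vv i - vv i
  exact Int.mul_ediv_cancel' (evenKey g hg i)

/-- The extension of `g` to `L'`. -/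
def rho (g : ML ≃ₗ[ℤ] ML) : ML' →ₗ[ℤ] ML' where
  toFun y := embM *ᵥ (g (Xmat *ᵥ y) + (y e1Idx - y e2Idx) • hvec g)
      + y e1Idx • E1v + y e2Idx • E2v
  map_add' y z := by
    simp only [Matrix.mulVec_add, map_add, Pi.add_apply]
    rw [show (y e1Idx + z e1Idx - (y e2Idx + z e2Idx))
        = (y e1Idx - y e2Idx) + (z e1Idx - z e2Idx) by ring]
    simp only [add_smul, Matrix.mulVec_add]
    module
  map_smul' c y := by
    simp only [Matrix.mulVec_smul, _root_.map_smul, Pi.smul_apply, smul_eq_mul,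
      RingHom.id_apply]
    rw [show (c * y e1Idx - c * y e2Idx) = c * (y e1Idx - y e2Idx) by ring]
    simp only [Matrix.mulVec_add, Matrix.mulVec_smul]
    module

lemma rho_apply (g : ML ≃ₗ[ℤ] ML) (y : ML') :
    rho g y = embM *ᵥ (g (Xmat *ᵥ y) + (y e1Idx - y e2Idx) • hvec g)
      + y e1Idx • E1v + y e2Idx • E2v := rfl

/-- Every element of `L'` decomposes via `emb` and the fourth hyperbolic plane. -/
lemma decomp (y : ML') :
    embM *ᵥ (Xmat *ᵥ y) + y e1Idx • E1v + y e2Idx • E2v = y := by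
  rw [Matrix.mulVec_mulVec, D1, Matrix.sub_mulVec, Matrix.sub_mulVec,
    Matrix.one_mulVec, mulVec_vecMulVec, mulVec_vecMulVec, E1v_dot, E2v_dot]
  module

/-- The master computation for `rho`. -/
lemma master (g : ML ≃ₗ[ℤ] ML) (hg : Hg g) (z : ML) (a b : ℤ) :
    rho g (embM *ᵥ z + a • E1v + b • E2v)
      = embM *ᵥ (g z + (a - b) • hvec g) + a • E1v + b • E2v := by
  have hx : Xmat *ᵥ (embM *ᵥ z + a • E1v + b • E2v) = z - z vIdx • vv := by
    simp only [Matrix.mulVec_add, Matrix.mulVec_smul, X_E1v, X_E2v, smul_zero,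
      add_zero, Matrix.mulVec_mulVec, XembM, Matrix.sub_mulVec, Matrix.one_mulVec,
      mulVec_vecMulVec, vv_dot]
  have h1 : (embM *ᵥ z + a • E1v + b • E2v) e1Idx = z vIdx + a := by
    have e11 : E1v e1Idx = 1 := by decide
    have e21 : E2v e1Idx = 0 := by decide
    simp only [Pi.add_apply, Pi.smul_apply, smul_eq_mul, emb_e1, e11, e21,
      mul_one, mul_zero, add_zero]
  have h2 : (embM *ᵥ z + a • E1v + b • E2v) e2Idx = -z vIdx + b := by
    have e12 : E1v e2Idx = 0 := by decide
    have e22 : E2v e2Idx = 1 := by decide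
    simp only [Pi.add_apply, Pi.smul_apply, smul_eq_mul, emb_e2, e12, e22,
      mul_one, mul_zero, zero_add]
    ring
  rw [rho_apply, hx, h1, h2, map_sub, _root_.map_smul]
  rw [show (z vIdx + a - (-z vIdx + b)) = (a - b) + z vIdx * 2 by ring]
  rw [add_smul, mul_smul, hg]
  simp only [Matrix.mulVec_add, Matrix.mulVec_sub, Matrix.mulVec_smul, embM_vv]
  module

lemma rho_comp (g g' : ML ≃ₗ[ℤ] ML) (hg : Hg g) (hg' : Hg g') (hgg' : Hg (g * g'))
    (y : ML') : rho g (rho g' y) = rho (g * g') y := by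
  have hh : hvec (g * g') = g (hvec g') + hvec g := by
    have h2 : (2:ℤ) • (g (hvec g') + hvec g) = (g * g') vv - vv := by
      rw [smul_add, ← _root_.map_smul, hg', hg]
      show g (g' vv - vv) + (g vv - vv) = g (g' vv) - vv
      rw [map_sub]
      abel
    have h2' := hgg'
    unfold Hg at h2'
    rw [← h2] at h2'
    funext i
    have h3 := congrFun h2' i
    simp only [Pi.smul_apply, smul_eq_mul, Pi.add_apply] at h3
    simp only [Pi.add_apply]
    omega
  conv_lhs => rw [← decomp y]
  conv_rhs => rw [← decomp y]
  rw [master g' hg' _ _ _, master g hg _ _ _, master (g * g') hgg' _ _ _]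
  rw [map_add, _root_.map_smul, hh]
  have hmul : (g * g') (Xmat *ᵥ y) = g (g' (Xmat *ᵥ y)) := rfl
  rw [hmul, smul_add]
  simp only [Matrix.mulVec_add, Matrix.mulVec_smul]
  module

lemma rho_one (y : ML') : rho 1 y = y := by
  have h1 : hvec 1 = 0 := by
    funext i
    show ((1 : ML ≃ₗ[ℤ] ML) vv i - vv i) / 2 = 0
    show (vv i - vv i) / 2 = 0
    simp
  rw [rho_apply, h1, smul_zero, add_zero]
  show embM *ᵥ (Xmat *ᵥ y) + y e1Idx • E1v + y e2Idx • E2v = y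
  exact decomp y

lemma lat'_E1 (u : ML') : latForm BL' u E1v = u e2Idx := by
  unfold latForm
  rw [BLp_E1, dot_E2v]

lemma lat'_E2 (u : ML') : latForm BL' u E2v = u e1Idx := by
  unfold latForm
  rw [BLp_E2, dot_E1v]

lemma rho_isometry (g : ML ≃ₗ[ℤ] ML) (hgH : Hg g)
    (hiso : ∀ u w : ML, latForm BL (g u) (g w) = latForm BL u w) (y y' : ML') :
    latForm BL' (rho g y) (rho g y') = latForm BL' y y' := by
  have hxv : (Xmat *ᵥ y) vIdx = 0 := X_row_v y
  have hx'v : (Xmat *ᵥ y') vIdx = 0 := X_row_v y'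
  have hv2 : 2 * hvec g vIdx = g vv vIdx - 1 := by
    have h := congrFun hgH vIdx
    simp only [Pi.smul_apply, smul_eq_mul, Pi.sub_apply] at h
    have hvvv : vv vIdx = 1 := by decide
    rw [hvvv] at h
    exact h
  have hgx_h : ∀ u : ML, latForm BL (g u) (hvec g) = g u vIdx - u vIdx := by
    intro u
    have e1 : latForm BL (g u) ((2:ℤ) • hvec g)
        = latForm BL (g u) (g vv) - latForm BL (g u) vv := by
      rw [hgH, lat_sub_right]
    rw [lat_smul_right, hiso u vv, lat_vv_right, lat_vv_right] at e1
    linarith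
  have hh_gx : ∀ u : ML, latForm BL (hvec g) (g u) = g u vIdx - u vIdx := by
    intro u
    have e1 : latForm BL ((2:ℤ) • hvec g) (g u)
        = latForm BL (g vv) (g u) - latForm BL vv (g u) := by
      rw [hgH, lat_sub_left]
    rw [lat_smul_left, hiso vv u, lat_vv_left, lat_vv_left] at e1
    linarith
  have hhh : latForm BL (hvec g) (hvec g) = g vv vIdx - 1 := by
    have e1 : latForm BL ((2:ℤ) • hvec g) ((2:ℤ) • hvec g)
        = latForm BL (g vv - vv) (g vv - vv) := by rw [hgH]
    rw [lat_smul_left, lat_smul_right, lat_sub_left, lat_sub_right, lat_sub_right,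
      hiso vv vv, lat_vv_right, lat_vv_right, lat_vv_left] at e1
    have hvvv : vv vIdx = 1 := by decide
    rw [hvvv] at e1
    linarith
  rw [← decomp y, ← decomp y']
  rw [master g hgH, master g hgH, L1, L1]
  rw [lat_bilin BL (g (Xmat *ᵥ y)) (g (Xmat *ᵥ y')) (hvec g) (hvec g)
    (y e1Idx - y e2Idx) (y' e1Idx - y' e2Idx)]
  rw [hiso, hgx_h, hh_gx, hhh]
  simp only [Pi.add_apply, Pi.smul_apply, smul_eq_mul]
  rw [hxv, hx'v]
  linear_combination (-(y e1Idx - y e2Idx) * (y' e1Idx - y' e2Idx)) * hv2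

lemma emb_cancel {u w : ML} (h : embM *ᵥ u = embM *ᵥ w) : u = w := by
  have h3 := congrArg (fun q => Pmat *ᵥ q) h
  replace h3 : Pmat *ᵥ (embM *ᵥ u) = Pmat *ᵥ (embM *ᵥ w) := h3
  rwa [Matrix.mulVec_mulVec, Matrix.mulVec_mulVec, P1, Matrix.one_mulVec,
    Matrix.one_mulVec] at h3

/-- For any subgroup `G` of the isometry group `O(L)` of
`L = U³ ⊕ E8(-1)² ⊕ (-2)` there are a primitive embedding `ι : L → L'` into
`L' = U⁴ ⊕ E8(-1)²` and an extension `ρ` of the `G`-action to isometries of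
`L'` (compatible with `ι`) such that `S_G(L') = ι (S_G(L))`. -/
theorem extend_isometries (G : Subgroup (ML ≃ₗ[ℤ] ML))
    (hG : ∀ g ∈ G, ∀ x y : ML, latForm BL (g x) (g y) = latForm BL x y) :
    ∃ (emb : ML →ₗ[ℤ] ML') (ρ : G →* (ML' ≃ₗ[ℤ] ML')),
      -- `emb` is a primitive embedding of lattices:
      Function.Injective emb ∧
      (∀ x y : ML, latForm BL' (emb x) (emb y) = latForm BL x y) ∧
      (∀ (x : ML') (c : ℤ), c ≠ 0 → c • x ∈ LinearMap.range emb →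
        x ∈ LinearMap.range emb) ∧
      -- `ρ` extends the `G`-action by isometries of `L'`:
      (∀ g : G, ∀ x y : ML', latForm BL' (ρ g x) (ρ g y) = latForm BL' x y) ∧
      (∀ g : G, ∀ x : ML, ρ g (emb x) = emb ((g : ML ≃ₗ[ℤ] ML) x)) ∧
      -- the co-invariant lattices agree: `S_G(L') = emb (S_G(L))`
      ({ y : ML' | ∀ t : ML', (∀ g : G, ρ g t = t) → latForm BL' y t = 0 } =
        emb '' { x : ML | ∀ t : ML, (∀ g ∈ G, g t = t) → latForm BL x t = 0 }) := by
  have hHg : ∀ g : G, Hg ((g : ML ≃ₗ[ℤ] ML)) := fun g => hg_of_iso _ (hG _ g.2)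
  have key : ∀ (g h : G) (y : ML'),
      rho (g : ML ≃ₗ[ℤ] ML) (rho (h : ML ≃ₗ[ℤ] ML) y)
        = rho ((g * h : G) : ML ≃ₗ[ℤ] ML) y := by
    intro g h y
    exact rho_comp _ _ (hHg g) (hHg h) (hHg (g * h)) y
  let ρ : G →* (ML' ≃ₗ[ℤ] ML') := MonoidHom.mk'
    (fun g => LinearEquiv.ofLinear (rho (g : ML ≃ₗ[ℤ] ML)) (rho ((g⁻¹ : G) : ML ≃ₗ[ℤ] ML))
      (by
        apply LinearMap.ext
        intro y
        simp only [LinearMap.coe_comp, Function.comp_apply, LinearMap.id_coe, id_eq]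
        rw [key g g⁻¹ y, mul_inv_cancel]
        exact rho_one y)
      (by
        apply LinearMap.ext
        intro y
        simp only [LinearMap.coe_comp, Function.comp_apply, LinearMap.id_coe, id_eq]
        rw [key g⁻¹ g y, inv_mul_cancel]
        exact rho_one y))
    (by
      intro a b
      exact LinearEquiv.toLinearMap_injective (LinearMap.ext fun y => (key a b y).symm))
  have hρapp : ∀ (g : G) (t : ML'), ρ g t = rho (g : ML ≃ₗ[ℤ] ML) t := fun _ _ => rfl
  have hembapp : ∀ x : ML, Matrix.mulVecLin embM x = embM *ᵥ x := fun _ => rfl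
  -- injectivity via the left inverse `Pmat`
  have hinj : Function.Injective (Matrix.mulVecLin embM) := by
    intro u w huw
    have h : Pmat *ᵥ (embM *ᵥ u) = Pmat *ᵥ (embM *ᵥ w) := by
      rw [hembapp, hembapp] at huw
      rw [huw]
    rwa [Matrix.mulVec_mulVec, Matrix.mulVec_mulVec, P1, Matrix.one_mulVec,
      Matrix.one_mulVec] at h
  -- compatibility
  have hcompat : ∀ (g : G) (x : ML),
      ρ g (Matrix.mulVecLin embM x) = Matrix.mulVecLin embM ((g : ML ≃ₗ[ℤ] ML) x) := by
    intro g x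
    rw [hρapp, hembapp, hembapp]
    have h0 : embM *ᵥ x = embM *ᵥ x + (0:ℤ) • E1v + (0:ℤ) • E2v := by
      simp
    rw [h0, master _ (hHg g)]
    simp
  refine ⟨Matrix.mulVecLin embM, ρ, hinj, ?_, ?_, ?_, hcompat, ?_⟩
  · -- isometry of the embedding
    intro x y
    rw [hembapp, hembapp]
    exact F1 x y
  · -- primitivity
    intro x c hc hmem
    obtain ⟨u, hu⟩ := hmem
    have hcancel : ∀ a b : ML', c • a = c • b → a = b := by
      intro a b h
      funext i
      have h' := congrFun h i
      simp only [Pi.smul_apply, smul_eq_mul] at h'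
      exact mul_left_cancel₀ hc h'
    have h1 : embM *ᵥ (Pmat *ᵥ (c • x)) = c • x := by
      rw [← hu, hembapp,
        show Pmat *ᵥ (embM *ᵥ u) = (Pmat * embM) *ᵥ u from Matrix.mulVec_mulVec u Pmat embM,
        P1, Matrix.one_mulVec]
    have h2 : embM *ᵥ (Pmat *ᵥ (c • x)) = c • (embM *ᵥ (Pmat *ᵥ x)) := by
      rw [Matrix.mulVec_smul, Matrix.mulVec_smul]
    exact ⟨Pmat *ᵥ x, by rw [hembapp]; exact hcancel _ _ (h2.symm.trans h1)⟩
  · -- isometry of rho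
    intro g y y'
    rw [hρapp, hρapp]
    exact rho_isometry _ (hHg g) (hG _ g.2) y y'
  · -- co-invariant lattices
    apply Set.ext
    intro y
    simp only [Set.mem_setOf_eq, Set.mem_image]
    constructor
    · intro hy
      have hwinv : ∀ g : G, ρ g (E1v + E2v) = E1v + E2v := by
        intro g
        rw [hρapp]
        have h0 : E1v + E2v = embM *ᵥ 0 + (1:ℤ) • E1v + (1:ℤ) • E2v := by
          rw [Matrix.mulVec_zero]; module
        rw [h0, master _ (hHg g)]
        rw [map_zero, sub_self, zero_smul, add_zero, Matrix.mulVec_zero]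
      have hsum0 := hy (E1v + E2v) hwinv
      rw [lat_add_right, lat'_E1, lat'_E2] at hsum0
      have hyx : embM *ᵥ (Pmat *ᵥ y) = y := by
        rw [Matrix.mulVec_mulVec, P2, Matrix.add_mulVec, Matrix.one_mulVec,
          mulVec_vecMulVec]
        have hdot : (-E1v - E2v) ⬝ᵥ y = 0 := by
          rw [sub_dotProduct, neg_dotProduct, E1v_dot, E2v_dot]
          linarith
        rw [hdot, zero_smul, add_zero]
      refine ⟨Pmat *ᵥ y, ?_, by rw [hembapp]; exact hyx⟩
      intro t ht
      have hinv : ∀ g : G, ρ g (embM *ᵥ t) = embM *ᵥ t := by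
        intro g
        have h := hcompat g t
        rw [hembapp, hembapp] at h
        rw [h, ht _ g.2]
      have h0 := hy (embM *ᵥ t) hinv
      rw [← hyx, F1] at h0
      exact h0
    · rintro ⟨x, hx, rfl⟩
      intro t' hinv
      have hde := decomp t'
      have hstep : ∀ g : G, (g : ML ≃ₗ[ℤ] ML) (Xmat *ᵥ t')
          + (t' e1Idx - t' e2Idx) • hvec (g : ML ≃ₗ[ℤ] ML) = Xmat *ᵥ t' := by
        intro g
        have h := hinv g
        rw [hρapp] at h
        conv_lhs at h => rw [← hde]
        rw [master _ (hHg g)] at h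
        conv_rhs at h => rw [← hde]
        exact emb_cancel (add_right_cancel (add_right_cancel h))
      have hTinv : ∀ g ∈ G, g ((2:ℤ) • (Xmat *ᵥ t') + (t' e1Idx - t' e2Idx) • vv)
          = (2:ℤ) • (Xmat *ᵥ t') + (t' e1Idx - t' e2Idx) • vv := by
        intro g hgm
        have hs := hstep ⟨g, hgm⟩
        have hH := hHg ⟨g, hgm⟩
        have hgt : g (Xmat *ᵥ t') = Xmat *ᵥ t' - (t' e1Idx - t' e2Idx) • hvec g :=
          eq_sub_of_add_eq hs
        have hgv : g vv = (2:ℤ) • hvec g + vv := eq_add_of_sub_eq hH.symm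
        rw [map_add, _root_.map_smul, _root_.map_smul, hgt, hgv]
        module
      have hlatT := hx _ hTinv
      rw [lat_add_right, lat_smul_right, lat_smul_right, lat_vv_right] at hlatT
      have h6 : 2 * latForm BL x (Xmat *ᵥ t')
          = 2 * ((t' e1Idx - t' e2Idx) * x vIdx) := by
        linear_combination hlatT
      have h5 : latForm BL x (Xmat *ᵥ t') = (t' e1Idx - t' e2Idx) * x vIdx :=
        mul_left_cancel₀ two_ne_zero h6
      rw [hembapp]
      conv_lhs => rw [← hde]
      have h0 : embM *ᵥ x = embM *ᵥ x + (0:ℤ) • E1v + (0:ℤ) • E2v := by simp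
      rw [h0, L1]
      linear_combination h5
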